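/- arXiv:math/0506314 — 5 statements merged into one kernel-verified Lean document; each statement's English description precedes it below -/
import Mathlib

section
/- If J is an abelian complex structure on a real Lie algebra g, then each term g_ℓ of the ascending central series of g is J-invariant: J(g_ℓ) ⊆ g_ℓ for all ℓ ≥ 0. -/
/-- If `J` is an abelian complex structure on a real Lie algebra `g`, then each
term of the ascending central series `g_0 = 0`, `g_{ℓ+1} = {X : ⁅X, g⁆ ⊆ g_ℓ}`
is `J`-invariant. -/
theorem ascending_series_J_invariant
    {g : Type*} [LieRing g] [LieAlgebra ℝ g] [FiniteDimensional ℝ g]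
    (J : g →ₗ[ℝ] g) (hJ2 : ∀ X : g, J (J X) = -X)
    (hab : ∀ A B : g, ⁅J A, J B⁆ = ⁅A, B⁆)
    (gs : ℕ → Submodule ℝ g) (h0 : gs 0 = ⊥)
    (hsucc : ∀ (ℓ : ℕ) (X : g), X ∈ gs (ℓ + 1) ↔ ∀ Y : g, ⁅X, Y⁆ ∈ gs ℓ) :
    ∀ (ℓ : ℕ) (X : g), X ∈ gs ℓ → J X ∈ gs ℓ := by
  intro ℓ
  induction ℓ with
  | zero =>
    intro X hX
    rw [h0, Submodule.mem_bot] at hX ⊢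
    simp [hX]
  | succ n ih =>
    intro X hX
    rw [hsucc] at hX ⊢
    intro Y
    have h : ⁅J X, Y⁆ = ⁅X, -J Y⁆ := by
      rw [← hab X (-J Y), map_neg, hJ2, neg_neg]
    rw [h]
    exact hX _
end

section
/- Let g be a real Lie algebra with complex structure J, and suppose J is abelian. For V a (1,0)-vector and U̅ a (0,1)-vector in the complexification of g, define ∂̄_{U̅} V as the (1,0)-component of [U̅, V]. Then the map ∂̄ : g^{1,0} → Hom(g^{0,1}, g^{1,0}) extended to forms by ∂̄(ω̄ ⊗ V) = (-1)^k ω̄ ∧ ∂̄V on g^{*(0,k)} ⊗ g^{1,0} satisfies ∂̄ ∘ ∂̄ = 0. -/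
open TensorProduct

/-- For an abelian complex structure `J` on a real Lie algebra `g`, the
operator `∂̄` defined on (1,0)-vectors by `∂̄_{Ū} V = ⁅Ū, V⁆^{1,0}` and
extended to `g^{*(0,k)} ⊗ g^{1,0}` by `∂̄(ω̄ ⊗ V) = (-1)ᵏ ω̄ ∧ ∂̄V`
satisfies `∂̄ ∘ ∂̄ = 0`.  Since the forms `ω̄` are not differentiated, the
condition `∂̄ ∘ ∂̄ = 0` in every degree is equivalent to its degree-zero
instance: `∂̄_{Ū}(∂̄_{W̄} V) = ∂̄_{W̄}(∂̄_{Ū} V)` for all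
(0,1)-vectors `Ū, W̄` and (1,0)-vectors `V`, where the (1,0)-projection is
`P^{1,0} = (1/2)(id - i Jᶜ)`. -/
theorem dbar_squared_zero
    {g : Type*} [LieRing g] [LieAlgebra ℝ g] [FiniteDimensional ℝ g]
    (J : g →ₗ[ℝ] g) (hJ2 : ∀ X : g, J (J X) = -X)
    (hab : ∀ A B : g, ⁅J A, J B⁆ = ⁅A, B⁆) :
    ∀ (Jc : (ℂ ⊗[ℝ] g) →ₗ[ℂ] (ℂ ⊗[ℝ] g)), Jc = J.baseChange ℂ →
    ∀ (P10 : (ℂ ⊗[ℝ] g) →ₗ[ℂ] (ℂ ⊗[ℝ] g)),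
      P10 = (2⁻¹ : ℂ) • (LinearMap.id - Complex.I • Jc) →
    ∀ V U W : ℂ ⊗[ℝ] g,
      Jc V = Complex.I • V →
      Jc U = -(Complex.I • U) → Jc W = -(Complex.I • W) →
      P10 ⁅U, P10 ⁅W, V⁆⁆ = P10 ⁅W, P10 ⁅U, V⁆⁆ := by
  intro Jc hJc P10 hP10 V U W hV hU hW
  -- local bracket API, bridging instance-defeq issues by `exact`
  have ladd : ∀ X Y Z : ℂ ⊗[ℝ] g, ⁅X, Y + Z⁆ = ⁅X, Y⁆ + ⁅X, Z⁆ :=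
    fun X Y Z => lie_add X Y Z
  have addl : ∀ X Y Z : ℂ ⊗[ℝ] g, ⁅X + Y, Z⁆ = ⁅X, Z⁆ + ⁅Y, Z⁆ :=
    fun X Y Z => add_lie X Y Z
  have lsmul : ∀ (c : ℂ) (X Y : ℂ ⊗[ℝ] g), ⁅X, c • Y⁆ = c • ⁅X, Y⁆ :=
    fun c X Y => lie_smul c X Y
  have smull : ∀ (c : ℂ) (X Y : ℂ ⊗[ℝ] g), ⁅c • X, Y⁆ = c • ⁅X, Y⁆ :=
    fun c X Y => smul_lie c X Y
  have lzero : ∀ X : ℂ ⊗[ℝ] g, ⁅X, (0 : ℂ ⊗[ℝ] g)⁆ = 0 := fun X => lie_zero X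
  have zerol : ∀ X : ℂ ⊗[ℝ] g, ⁅(0 : ℂ ⊗[ℝ] g), X⁆ = 0 := fun X => zero_lie X
  have lneg : ∀ X Y : ℂ ⊗[ℝ] g, ⁅X, -Y⁆ = -⁅X, Y⁆ := fun X Y => lie_neg X Y
  have negl : ∀ X Y : ℂ ⊗[ℝ] g, ⁅-X, Y⁆ = -⁅X, Y⁆ := fun X Y => neg_lie X Y
  have lsub : ∀ X Y Z : ℂ ⊗[ℝ] g, ⁅X, Y - Z⁆ = ⁅X, Y⁆ - ⁅X, Z⁆ :=
    fun X Y Z => lie_sub X Y Z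
  have jacobi : ∀ X Y Z : ℂ ⊗[ℝ] g, ⁅⁅X, Y⁆, Z⁆ = ⁅X, ⁅Y, Z⁆⁆ - ⁅Y, ⁅X, Z⁆⁆ :=
    fun X Y Z => lie_lie X Y Z
  have btmul : ∀ (a b : ℂ) (x y : g),
      ⁅a ⊗ₜ[ℝ] x, b ⊗ₜ[ℝ] y⁆ = (a * b) ⊗ₜ[ℝ] ⁅x, y⁆ :=
    fun a b x y => LieAlgebra.ExtendScalars.bracket_tmul ℝ ℂ g g a b x y
  -- complexified abelian condition
  have habC : ∀ A B : ℂ ⊗[ℝ] g, ⁅Jc A, Jc B⁆ = ⁅A, B⁆ := by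
    subst hJc
    intro A B
    induction A using TensorProduct.induction_on with
    | zero => rw [map_zero, zerol, zerol]
    | tmul a x =>
      induction B using TensorProduct.induction_on with
      | zero => rw [map_zero, lzero, lzero]
      | tmul b y =>
        rw [LinearMap.baseChange_tmul, LinearMap.baseChange_tmul, btmul, btmul, hab]
      | add B₁ B₂ h₁ h₂ => rw [map_add, ladd, ladd, h₁, h₂]
    | add A₁ A₂ h₁ h₂ => rw [map_add, addl, addl, h₁, h₂]
  -- two (0,1)-vectors bracket to zero
  have h01 : ∀ X Y : ℂ ⊗[ℝ] g, Jc X = -(Complex.I • X) → Jc Y = -(Complex.I • Y) →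
      ⁅X, Y⁆ = 0 := by
    intro X Y hX hY
    have h := habC X Y
    rw [hX, hY, negl, lneg, neg_neg, smull, lsmul, smul_smul,
      Complex.I_mul_I, neg_one_smul] at h
    have h2 : (2 : ℂ) • ⁅X, Y⁆ = 0 := by
      rw [two_smul]; nth_rewrite 1 [← h]; exact neg_add_cancel _
    exact (smul_eq_zero.mp h2).resolve_left two_ne_zero
  -- Jc squared is -id
  have hJc2 : ∀ X : ℂ ⊗[ℝ] g, Jc (Jc X) = -X := by
    subst hJc
    intro X
    induction X using TensorProduct.induction_on with
    | zero => simp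
    | tmul a x =>
      rw [LinearMap.baseChange_tmul, LinearMap.baseChange_tmul, hJ2, TensorProduct.tmul_neg]
    | add X₁ X₂ h₁ h₂ => rw [map_add, map_add, h₁, h₂, neg_add]
  -- P01 of anything is a (0,1)-vector, where P01 Y = Y - P10 Y
  have hP01 : ∀ Y : ℂ ⊗[ℝ] g, Jc (Y - P10 Y) = -(Complex.I • (Y - P10 Y)) := by
    intro Y
    rw [hP10]
    simp only [LinearMap.smul_apply, LinearMap.sub_apply, LinearMap.id_apply,
      map_sub, map_smul, hJc2]
    match_scalars
    · linear_combination (2⁻¹ : ℂ) * Complex.I_sq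
    · ring
  -- hence ⁅X, P10 Y⁆ = ⁅X, Y⁆ for (0,1)-vector X
  have key : ∀ X Y : ℂ ⊗[ℝ] g, Jc X = -(Complex.I • X) →
      ⁅X, P10 Y⁆ = ⁅X, Y⁆ := by
    intro X Y hX
    have h := h01 X (Y - P10 Y) hX (hP01 Y)
    rw [lsub, sub_eq_zero] at h
    exact h.symm
  rw [key U _ hU, key W _ hW]
  have jac := jacobi U W V
  rw [h01 U W hU hW, zerol, eq_comm, sub_eq_zero] at jac
  rw [jac]
end

section
/- Let g be a 2n-dimensional real nilpotent Lie algebra with a nilpotent complex structure J, and suppose the center of g has real dimension 2. Then the center of g equals g_1^J and in particular is J-invariant. -/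
/-- If `J` is a nilpotent complex structure on a real nilpotent Lie algebra `g`
whose center has real dimension 2, then the center equals `g₁ᴶ`; in particular
the center is `J`-invariant. -/
theorem center_eq_gJ_one_of_nilpotent
    {g : Type*} [LieRing g] [LieAlgebra ℝ g] [FiniteDimensional ℝ g]
    [LieRing.IsNilpotent g]
    (J : g →ₗ[ℝ] g) (hJ2 : ∀ X : g, J (J X) = -X)
    (gJ : ℕ → Submodule ℝ g) (h0 : gJ 0 = ⊥)
    (hsucc : ∀ (ℓ : ℕ) (X : g),
      X ∈ gJ (ℓ + 1) ↔ ∀ Y : g, ⁅X, Y⁆ ∈ gJ ℓ ∧ ⁅J X, Y⁆ ∈ gJ ℓ)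
    (hnilp : ∃ k, gJ k = ⊤)
    (hcenter : Module.finrank ℝ (LieAlgebra.center ℝ g) = 2) :
    (∀ X : g, X ∈ LieAlgebra.center ℝ g ↔ X ∈ gJ 1) ∧
    (∀ X ∈ LieAlgebra.center ℝ g, J X ∈ LieAlgebra.center ℝ g) := by
  classical
  have hmem1 : ∀ X : g, X ∈ gJ 1 ↔ (∀ Y : g, ⁅X, Y⁆ = 0 ∧ ⁅J X, Y⁆ = 0) := by
    intro X
    rw [hsucc 0 X]
    simp [h0]
  have hcentmem : ∀ X : g, X ∈ LieAlgebra.center ℝ g ↔ ∀ Y : g, ⁅X, Y⁆ = 0 := by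
    intro X
    rw [LieModule.mem_maxTrivSubmodule]
    constructor
    · intro h Y
      rw [← lie_skew, h Y, neg_zero]
    · intro h Y
      rw [← lie_skew, h Y, neg_zero]
  have hsub : gJ 1 ≤ (LieAlgebra.center ℝ g).toSubmodule := by
    intro X hX
    rw [LieSubmodule.mem_toSubmodule, hcentmem]
    intro Y
    exact ((hmem1 X).1 hX Y).1
  have hJinv : ∀ X, X ∈ gJ 1 → J X ∈ gJ 1 := by
    intro X hX
    rw [hmem1] at hX ⊢
    intro Y
    refine ⟨(hX Y).2, ?_⟩
    rw [hJ2 X, neg_lie, (hX Y).1, neg_zero]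
  have hne : gJ 1 ≠ ⊥ := by
    intro hbot
    have hall : ∀ ℓ, gJ ℓ = ⊥ := by
      intro ℓ
      induction ℓ with
      | zero => exact h0
      | succ n ih =>
        rw [← hbot]
        ext X
        rw [hsucc n X, hmem1 X]
        simp [ih]
    obtain ⟨k, hk⟩ := hnilp
    have htb : (⊤ : Submodule ℝ g) = ⊥ := by rw [← hk, hall k]
    have hzero : ∀ x : g, x = 0 := by
      intro x
      have : x ∈ (⊥ : Submodule ℝ g) := htb ▸ Submodule.mem_top
      simpa using this
    have hss : Subsingleton (LieAlgebra.center ℝ g) :=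
      ⟨fun a b => Subtype.ext (by rw [hzero a.1, hzero b.1])⟩
    have := Module.finrank_zero_of_subsingleton (R := ℝ) (M := LieAlgebra.center ℝ g)
    omega
  obtain ⟨X, hX, hX0⟩ := (Submodule.ne_bot_iff _).1 hne
  have hli : LinearIndependent ℝ ![X, J X] := by
    rw [LinearIndependent.pair_iff]
    intro s t hst
    have h2 : s • J X + t • -X = 0 := by
      have := congrArg J hst
      simpa [map_add, map_smul, hJ2 X] using this
    have h3 : (s ^ 2 + t ^ 2) • X = 0 := by
      linear_combination (norm := module) s • hst - t • h2
    have hst0 : s ^ 2 + t ^ 2 = 0 := by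
      rcases smul_eq_zero.1 h3 with h | h
      · exact h
      · exact absurd h hX0
    constructor <;> nlinarith [sq_nonneg s, sq_nonneg t]
  have hspan : Submodule.span ℝ (Set.range ![X, J X]) ≤ gJ 1 := by
    rw [Submodule.span_le]
    rintro z ⟨i, rfl⟩
    fin_cases i
    · exact hX
    · exact hJinv X hX
  have h2le : 2 ≤ Module.finrank ℝ (gJ 1) := by
    have hc : Module.finrank ℝ (Submodule.span ℝ (Set.range ![X, J X])) = 2 := by
      rw [finrank_span_eq_card hli]
      simp
    calc 2 = Module.finrank ℝ (Submodule.span ℝ (Set.range ![X, J X])) := hc.symm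
      _ ≤ _ := Submodule.finrank_mono hspan
  have heq : gJ 1 = (LieAlgebra.center ℝ g).toSubmodule := by
    refine Submodule.eq_of_le_of_finrank_le hsub ?_
    have : Module.finrank ℝ ((LieAlgebra.center ℝ g).toSubmodule) = 2 := hcenter
    omega
  constructor
  · intro Z
    rw [← LieSubmodule.mem_toSubmodule, ← heq]
  · intro Z hZ
    have hZ1 : Z ∈ gJ 1 := by
      rw [heq, LieSubmodule.mem_toSubmodule]; exact hZ
    have := hJinv Z hZ1
    rw [heq, LieSubmodule.mem_toSubmodule] at this
    exact this
end

section
/- Let g be a real Lie algebra with complex structure J such that every 1-form of type (1,0) has differential of type (1,1) (i.e., dω vanishes on pairs of (1,0)-vectors and on pairs of (0,1)-vectors). Then J is abelian: [JA, JB] = [A, B] for all A, B ∈ g. -/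
open TensorProduct

/-- If every (1,0)-form on `g_ℂ` has differential of type (1,1) (it vanishes
on pairs of (1,0)-vectors and on pairs of (0,1)-vectors), then the complex
structure `J` is abelian: `⁅J A, J B⁆ = ⁅A, B⁆`. -/
theorem abelian_of_d_oneZero_type_one_one
    {g : Type*} [LieRing g] [LieAlgebra ℝ g] [FiniteDimensional ℝ g]
    (J : g →ₗ[ℝ] g) (hJ2 : ∀ X : g, J (J X) = -X)
    (Jc : (ℂ ⊗[ℝ] g) →ₗ[ℂ] (ℂ ⊗[ℝ] g)) (hJc : Jc = J.baseChange ℂ)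
    (h : ∀ ω : (ℂ ⊗[ℝ] g) →ₗ[ℂ] ℂ,
      (∀ v : ℂ ⊗[ℝ] g, Jc v = -(Complex.I • v) → ω v = 0) →
      ∀ X Y : ℂ ⊗[ℝ] g,
        ((Jc X = Complex.I • X ∧ Jc Y = Complex.I • Y) ∨
         (Jc X = -(Complex.I • X) ∧ Jc Y = -(Complex.I • Y))) →
        -ω ⁅X, Y⁆ = 0) :
    ∀ A B : g, ⁅J A, J B⁆ = ⁅A, B⁆ := by
  intro A B
  -- the real-part projection
  set φre : ℂ ⊗[ℝ] g →ₗ[ℝ] g :=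
    (TensorProduct.lid ℝ g).toLinearMap ∘ₗ LinearMap.rTensor g Complex.reLm with hφre_def
  have hφre : ∀ (c : ℂ) (x : g), φre (c ⊗ₜ x) = c.re • x := by
    intro c x; simp [hφre_def]
  -- projection onto the (1,0) part
  set P : (ℂ ⊗[ℝ] g) →ₗ[ℂ] (ℂ ⊗[ℝ] g) :=
    (2⁻¹ : ℂ) • (LinearMap.id - Complex.I • Jc) with hP_def
  have hP01 : ∀ v, Jc v = -(Complex.I • v) → P v = 0 := by
    intro v hv
    simp only [hP_def, LinearMap.smul_apply, LinearMap.sub_apply, LinearMap.id_apply, hv,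
      smul_neg, smul_smul, Complex.I_mul_I, neg_smul, one_smul, neg_neg, sub_neg_eq_add]
    simp [smul_smul]
  have key : ∀ X Y : ℂ ⊗[ℝ] g,
      ((Jc X = Complex.I • X ∧ Jc Y = Complex.I • Y) ∨
       (Jc X = -(Complex.I • X) ∧ Jc Y = -(Complex.I • Y))) → P ⁅X, Y⁆ = 0 := by
    intro X Y hXY
    rw [← Module.forall_dual_apply_eq_zero_iff ℂ]
    intro f
    have := h (f ∘ₗ P) (fun v hv => by simp [hP01 v hv]) X Y hXY
    simpa using this
  -- the (1,0) and (0,1) lifts of a real vector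
  have hoz : ∀ C : g, Jc ((1:ℂ) ⊗ₜ[ℝ] C - Complex.I ⊗ₜ J C)
      = Complex.I • ((1:ℂ) ⊗ₜ[ℝ] C - Complex.I ⊗ₜ J C) := by
    intro C
    simp only [hJc, map_sub, LinearMap.baseChange_tmul, hJ2, tmul_neg, smul_sub,
      TensorProduct.smul_tmul', smul_eq_mul, Complex.I_mul_I, mul_one, neg_tmul,
      sub_neg_eq_add]
    abel
  have hzo : ∀ C : g, Jc ((1:ℂ) ⊗ₜ[ℝ] C + Complex.I ⊗ₜ J C)
      = -(Complex.I • ((1:ℂ) ⊗ₜ[ℝ] C + Complex.I ⊗ₜ J C)) := by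
    intro C
    simp only [hJc, map_add, LinearMap.baseChange_tmul, hJ2, tmul_neg, smul_add,
      TensorProduct.smul_tmul', smul_eq_mul, Complex.I_mul_I, mul_one, neg_tmul,
      neg_add, neg_neg]
    abel
  set XA := (1:ℂ) ⊗ₜ[ℝ] A - Complex.I ⊗ₜ J A with hXA
  set XB := (1:ℂ) ⊗ₜ[ℝ] B - Complex.I ⊗ₜ J B with hXB
  set YA := (1:ℂ) ⊗ₜ[ℝ] A + Complex.I ⊗ₜ J A with hYA
  set YB := (1:ℂ) ⊗ₜ[ℝ] B + Complex.I ⊗ₜ J B with hYB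
  set z := (1:ℂ) ⊗ₜ[ℝ] ⁅A, B⁆ - (1:ℂ) ⊗ₜ[ℝ] ⁅J A, J B⁆ with hz
  have hw : ⁅XA, XB⁆ + ⁅YA, YB⁆ = (2:ℂ) • z := by
    rw [hz, smul_sub, two_smul, two_smul]
    simp only [hXA, hXB, hYA, hYB, lie_sub, sub_lie, lie_add, add_lie,
      LieAlgebra.ExtendScalars.bracket_tmul, one_mul, mul_one, Complex.I_mul_I, neg_tmul]
    abel
  have hPz : P ((2:ℂ) • z) = 0 := by
    rw [← hw, map_add, key XA XB (Or.inl ⟨hoz A, hoz B⟩), key YA YB (Or.inr ⟨hzo A, hzo B⟩),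
      add_zero]
  have hz0 : z = Complex.I • Jc z := by
    rw [map_smul] at hPz
    have h2 : P z = 0 := by
      rcases smul_eq_zero.mp hPz with h' | h'
      · exact absurd h' two_ne_zero
      · exact h'
    have := h2
    simp only [hP_def, LinearMap.smul_apply, LinearMap.sub_apply, LinearMap.id_apply,
      smul_eq_zero, inv_eq_zero, OfNat.ofNat_ne_zero, false_or, sub_eq_zero] at this
    exact this
  have hJcz : Complex.I • Jc z = Complex.I ⊗ₜ[ℝ] J ⁅A, B⁆ - Complex.I ⊗ₜ[ℝ] J ⁅J A, J B⁆ := by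
    simp only [hz, hJc, map_sub, LinearMap.baseChange_tmul, smul_sub,
      TensorProduct.smul_tmul', smul_eq_mul, mul_one]
  have := congrArg φre (hz0.trans hJcz)
  simp only [hz, map_sub, hφre, Complex.one_re, Complex.I_re, one_smul, zero_smul,
    sub_zero] at this
  exact (sub_eq_zero.mp this).symm
end

section
/- Let g be a real Lie algebra with abelian complex structure J. Equip the direct sum g^{1,0} ⊕ (g^{0,1})* with the bracket for which {g^{1,0}, g^{1,0}} = 0, {(g^{0,1})*, (g^{0,1})*} = 0, and {V, ω̄} = ι_V dω̄ for V ∈ g^{1,0}, ω̄ ∈ (g^{0,1})* (note ι_V dω̄ lies in (g^{0,1})* since d of a (0,1)-form has no (0,2)-part). Then this bracket makes g^{1,0} ⊕ (g^{0,1})* a Lie algebra. -/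
open TensorProduct

set_option maxHeartbeats 1000000 in
/-- For an abelian complex structure `J` on `g`, the direct sum
`g^{1,0} ⊕ (g^{0,1})*` carries a Lie algebra structure where
`{g^{1,0}, g^{1,0}} = 0`, `{(g^{0,1})*, (g^{0,1})*} = 0` and the cross bracket
is `{V, ω̄} = ι_V dω̄`, i.e. `(Z ↦ -ω̄ ⁅V, Z⁆)`.  Here `(g^{0,1})*` is
realised as the annihilator of `g^{1,0}` inside the dual of `g_ℂ`. -/
theorem lie_algebra_structure_on_sum
    {g : Type*} [LieRing g] [LieAlgebra ℝ g] [FiniteDimensional ℝ g]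
    (J : g →ₗ[ℝ] g) (hJ2 : ∀ X : g, J (J X) = -X)
    (hab : ∀ A B : g, ⁅J A, J B⁆ = ⁅A, B⁆)
    (g10 : Submodule ℂ (ℂ ⊗[ℝ] g))
    (hg10 : g10 = Module.End.eigenspace
      ((J.baseChange ℂ : (ℂ ⊗[ℝ] g) →ₗ[ℂ] (ℂ ⊗[ℝ] g)) :
        Module.End ℂ (ℂ ⊗[ℝ] g)) Complex.I) :
    ∃ (_i : LieRing (g10 × g10.dualAnnihilator))
      (_j : LieAlgebra ℂ (g10 × g10.dualAnnihilator)),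
      ∀ (V V' : g10) (ω ω' : g10.dualAnnihilator),
        ((⁅((V, ω) : g10 × g10.dualAnnihilator), ((V', ω') : g10 × g10.dualAnnihilator)⁆).1 : ℂ ⊗[ℝ] g) = 0 ∧
        ∀ Z : ℂ ⊗[ℝ] g,
          ((⁅((V, ω) : g10 × g10.dualAnnihilator), ((V', ω') : g10 × g10.dualAnnihilator)⁆).2 :
              Module.Dual ℂ (ℂ ⊗[ℝ] g)) Z
            = -(ω' : Module.Dual ℂ (ℂ ⊗[ℝ] g)) ⁅(V : ℂ ⊗[ℝ] g), Z⁆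
              + (ω : Module.Dual ℂ (ℂ ⊗[ℝ] g)) ⁅(V' : ℂ ⊗[ℝ] g), Z⁆ := by
  classical
  -- local copies of bracket lemmas at the ambient (ExtendScalars) bracket instance
  have baddl : ∀ x y z : ℂ ⊗[ℝ] g, ⁅x + y, z⁆ = ⁅x, z⁆ + ⁅y, z⁆ :=
    fun x y z => add_lie (L := ℂ ⊗[ℝ] g) (M := ℂ ⊗[ℝ] g) x y z
  have baddr : ∀ x y z : ℂ ⊗[ℝ] g, ⁅x, y + z⁆ = ⁅x, y⁆ + ⁅x, z⁆ :=
    fun x y z => lie_add (L := ℂ ⊗[ℝ] g) (M := ℂ ⊗[ℝ] g) x y z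
  have bsmull : ∀ (c : ℂ) (x y : ℂ ⊗[ℝ] g), ⁅c • x, y⁆ = c • ⁅x, y⁆ :=
    fun c x y => smul_lie (L := ℂ ⊗[ℝ] g) (M := ℂ ⊗[ℝ] g) c x y
  have bsmulr : ∀ (c : ℂ) (x y : ℂ ⊗[ℝ] g), ⁅x, c • y⁆ = c • ⁅x, y⁆ :=
    fun c x y => lie_smul (L := ℂ ⊗[ℝ] g) (M := ℂ ⊗[ℝ] g) c x y
  have bzerol : ∀ x : ℂ ⊗[ℝ] g, ⁅(0 : ℂ ⊗[ℝ] g), x⁆ = 0 :=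
    fun x => zero_lie (L := ℂ ⊗[ℝ] g) (M := ℂ ⊗[ℝ] g) x
  have bleib : ∀ x y z : ℂ ⊗[ℝ] g, ⁅x, ⁅y, z⁆⁆ = ⁅⁅x, y⁆, z⁆ + ⁅y, ⁅x, z⁆⁆ :=
    fun x y z => leibniz_lie (L₁ := ℂ ⊗[ℝ] g) (L₂ := ℂ ⊗[ℝ] g) (M := ℂ ⊗[ℝ] g) x y z
  -- base-changed abelian condition
  have habC : ∀ A B : ℂ ⊗[ℝ] g, ⁅J.baseChange ℂ A, J.baseChange ℂ B⁆ = ⁅A, B⁆ := by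
    intro A B
    induction A using TensorProduct.induction_on with
    | zero => simp [bzerol]
    | add x y hx hy => simp only [map_add, baddl, hx, hy]
    | tmul a x =>
      induction B using TensorProduct.induction_on with
      | zero =>
        have : ∀ w : ℂ ⊗[ℝ] g, ⁅w, (0 : ℂ ⊗[ℝ] g)⁆ = 0 :=
          fun w => lie_zero (L := ℂ ⊗[ℝ] g) (M := ℂ ⊗[ℝ] g) w
        simp [this]
      | add u v hu hv => simp only [map_add, baddr, hu, hv]
      | tmul b y =>
        simp only [LinearMap.baseChange_tmul, LieAlgebra.ExtendScalars.bracket_tmul, hab]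
  -- g10 is abelian
  have key : ∀ x y : ℂ ⊗[ℝ] g, x ∈ g10 → y ∈ g10 → ⁅x, y⁆ = 0 := by
    intro x y hx hy
    rw [hg10] at hx hy
    have hx' : J.baseChange ℂ x = Complex.I • x := Module.End.mem_eigenspace_iff.mp hx
    have hy' : J.baseChange ℂ y = Complex.I • y := Module.End.mem_eigenspace_iff.mp hy
    have h := habC x y
    rw [hx', hy', bsmull, bsmulr, smul_smul, Complex.I_mul_I, neg_one_smul] at h
    have h2 : (2 : ℂ) • ⁅x, y⁆ = 0 := by
      rw [two_smul]
      nth_rewrite 1 [← h]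
      exact neg_add_cancel _
    exact (smul_eq_zero.mp h2).resolve_left two_ne_zero
  have swap : ∀ (a b : g10) (Z : ℂ ⊗[ℝ] g),
      ⁅(a : ℂ ⊗[ℝ] g), ⁅(b : ℂ ⊗[ℝ] g), Z⁆⁆ = ⁅(b : ℂ ⊗[ℝ] g), ⁅(a : ℂ ⊗[ℝ] g), Z⁆⁆ := by
    intro a b Z
    have h := bleib (a : ℂ ⊗[ℝ] g) (b : ℂ ⊗[ℝ] g) Z
    rwa [key a b a.2 b.2, bzerol, zero_add] at h
  -- the linear functional Z ↦ -ω'⁅v,Z⁆ + ω⁅v',Z⁆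
  let F : (ℂ ⊗[ℝ] g) → g10.dualAnnihilator → (ℂ ⊗[ℝ] g) → g10.dualAnnihilator →
      Module.Dual ℂ (ℂ ⊗[ℝ] g) := fun v ω' v' ω =>
    { toFun := fun Z => -(ω' : Module.Dual ℂ (ℂ ⊗[ℝ] g)) ⁅v, Z⁆
        + (ω : Module.Dual ℂ (ℂ ⊗[ℝ] g)) ⁅v', Z⁆
      map_add' := by intro a b; simp only [baddr, map_add]; ring
      map_smul' := by intro c a; simp only [bsmulr, map_smul, smul_eq_mul, RingHom.id_apply]; ring }
  have Fapp : ∀ v ω' v' ω Z, F v ω' v' ω Z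
      = -(ω' : Module.Dual ℂ (ℂ ⊗[ℝ] g)) ⁅v, Z⁆
        + (ω : Module.Dual ℂ (ℂ ⊗[ℝ] g)) ⁅v', Z⁆ := fun _ _ _ _ _ => rfl
  have Fmem : ∀ (v : g10) ω' (v' : g10) ω,
      F (v : ℂ ⊗[ℝ] g) ω' (v' : ℂ ⊗[ℝ] g) ω ∈ g10.dualAnnihilator := by
    intro v ω' v' ω
    rw [Submodule.mem_dualAnnihilator]
    intro w hw
    rw [Fapp, key _ w v.2 hw, key _ w v'.2 hw, map_zero, map_zero, neg_zero, add_zero]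
  letI : Bracket (g10 × g10.dualAnnihilator) (g10 × g10.dualAnnihilator) :=
    ⟨fun p q => (0, ⟨F p.1 q.2 q.1 p.2, Fmem p.1 q.2 q.1 p.2⟩)⟩
  have hfst : ∀ p q : (g10 × g10.dualAnnihilator), (⁅p, q⁆).1 = 0 := fun _ _ => rfl
  letI : LieRing (g10 × g10.dualAnnihilator) :=
    { add_lie := ?addlie, lie_add := ?lieadd, lie_self := ?lieself, leibniz_lie := ?leib }
  letI : LieAlgebra ℂ (g10 × g10.dualAnnihilator) := { lie_smul := ?liesmul }
  refine ⟨inferInstance, inferInstance, fun V V' ω ω' => ⟨rfl, fun Z => rfl⟩⟩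
  case addlie =>
    intro x y z
    refine Prod.ext (by simp [hfst]) (Subtype.ext (LinearMap.ext fun Z => ?_))
    have h1 : ((⁅x + y, z⁆ : g10 × g10.dualAnnihilator).2 : Module.Dual ℂ (ℂ ⊗[ℝ] g)) Z
        = F (((x.1 + y.1 : g10)) : ℂ ⊗[ℝ] g) z.2 (z.1 : ℂ ⊗[ℝ] g) (x.2 + y.2) Z := rfl
    have h2 : (((⁅x, z⁆ + ⁅y, z⁆ : g10 × g10.dualAnnihilator)).2 : Module.Dual ℂ (ℂ ⊗[ℝ] g)) Z
        = F (x.1 : ℂ ⊗[ℝ] g) z.2 (z.1 : ℂ ⊗[ℝ] g) x.2 Z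
          + F (y.1 : ℂ ⊗[ℝ] g) z.2 (z.1 : ℂ ⊗[ℝ] g) y.2 Z := rfl
    rw [h1, h2, Fapp, Fapp, Fapp, Submodule.coe_add, Submodule.coe_add, baddl, map_add,
      LinearMap.add_apply]
    ring
  case lieadd =>
    intro x y z
    refine Prod.ext (by simp [hfst]) (Subtype.ext (LinearMap.ext fun Z => ?_))
    have h1 : ((⁅x, y + z⁆ : g10 × g10.dualAnnihilator).2 : Module.Dual ℂ (ℂ ⊗[ℝ] g)) Z
        = F (x.1 : ℂ ⊗[ℝ] g) (y.2 + z.2) (((y.1 + z.1 : g10)) : ℂ ⊗[ℝ] g) x.2 Z := rfl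
    have h2 : (((⁅x, y⁆ + ⁅x, z⁆ : g10 × g10.dualAnnihilator)).2 : Module.Dual ℂ (ℂ ⊗[ℝ] g)) Z
        = F (x.1 : ℂ ⊗[ℝ] g) y.2 (y.1 : ℂ ⊗[ℝ] g) x.2 Z
          + F (x.1 : ℂ ⊗[ℝ] g) z.2 (z.1 : ℂ ⊗[ℝ] g) x.2 Z := rfl
    rw [h1, h2, Fapp, Fapp, Fapp, Submodule.coe_add, Submodule.coe_add, baddl, map_add,
      LinearMap.add_apply]
    ring
  case lieself =>
    intro x
    refine Prod.ext (by simp [hfst]) (Subtype.ext (LinearMap.ext fun Z => ?_))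
    have h1 : ((⁅x, x⁆ : g10 × g10.dualAnnihilator).2 : Module.Dual ℂ (ℂ ⊗[ℝ] g)) Z
        = F (x.1 : ℂ ⊗[ℝ] g) x.2 (x.1 : ℂ ⊗[ℝ] g) x.2 Z := rfl
    have h2 : (((0 : g10 × g10.dualAnnihilator)).2 : Module.Dual ℂ (ℂ ⊗[ℝ] g)) Z = 0 := rfl
    rw [h1, h2, Fapp]
    ring
  case leib =>
    intro x y z
    refine Prod.ext (by simp [hfst]) (Subtype.ext (LinearMap.ext fun Z => ?_))
    have h1 : ((⁅x, ⁅y, z⁆⁆ : g10 × g10.dualAnnihilator).2 : Module.Dual ℂ (ℂ ⊗[ℝ] g)) Z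
        = -(F (y.1 : ℂ ⊗[ℝ] g) z.2 (z.1 : ℂ ⊗[ℝ] g) y.2) ⁅(x.1 : ℂ ⊗[ℝ] g), Z⁆
          + (x.2 : Module.Dual ℂ (ℂ ⊗[ℝ] g)) ⁅(((0 : g10)) : ℂ ⊗[ℝ] g), Z⁆ := rfl
    have h2 : (((⁅⁅x, y⁆, z⁆ + ⁅y, ⁅x, z⁆⁆ : g10 × g10.dualAnnihilator)).2 :
          Module.Dual ℂ (ℂ ⊗[ℝ] g)) Z
        = (-(z.2 : Module.Dual ℂ (ℂ ⊗[ℝ] g)) ⁅(((0 : g10)) : ℂ ⊗[ℝ] g), Z⁆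
            + (F (x.1 : ℂ ⊗[ℝ] g) y.2 (y.1 : ℂ ⊗[ℝ] g) x.2) ⁅(z.1 : ℂ ⊗[ℝ] g), Z⁆)
          + (-(F (x.1 : ℂ ⊗[ℝ] g) z.2 (z.1 : ℂ ⊗[ℝ] g) x.2) ⁅(y.1 : ℂ ⊗[ℝ] g), Z⁆
            + (y.2 : Module.Dual ℂ (ℂ ⊗[ℝ] g)) ⁅(((0 : g10)) : ℂ ⊗[ℝ] g), Z⁆) := rfl
    rw [h1, h2, show (((0 : g10)) : ℂ ⊗[ℝ] g) = 0 from rfl, bzerol, map_zero, map_zero,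
      map_zero, Fapp, Fapp, Fapp]
    rw [swap y.1 x.1 Z, swap z.1 x.1 Z, swap z.1 y.1 Z]
    ring
  case liesmul =>
    intro c x y
    refine Prod.ext (by simp [hfst]) (Subtype.ext (LinearMap.ext fun Z => ?_))
    have h1 : ((⁅x, c • y⁆ : g10 × g10.dualAnnihilator).2 : Module.Dual ℂ (ℂ ⊗[ℝ] g)) Z
        = F (x.1 : ℂ ⊗[ℝ] g) (c • y.2) (((c • y.1 : g10)) : ℂ ⊗[ℝ] g) x.2 Z := rfl
    have h2 : (((c • ⁅x, y⁆ : g10 × g10.dualAnnihilator)).2 : Module.Dual ℂ (ℂ ⊗[ℝ] g)) Z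
        = c • (F (x.1 : ℂ ⊗[ℝ] g) y.2 (y.1 : ℂ ⊗[ℝ] g) x.2 Z) := rfl
    rw [h1, h2, Fapp, Fapp, SetLike.val_smul, SetLike.val_smul, bsmull, map_smul,
      LinearMap.smul_apply]
    simp only [smul_eq_mul]
    ring
end
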